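/- Let f: ℝ^n × ℕ → ℝ be convex and continuously differentiable in the first argument with a point x* ∈ ℝ^n satisfying f(x,k) ≥ f(x*,k) = 0 for all x ∈ ℝ^n and all k ∈ ℕ. Let g: ℝ^n → ℝ be strictly convex and continuously differentiable, let D be the Bregman distance induced by g, and assume D is convex in its second argument. Let λ_max ∈ [0,1), λ_{k+1} ∈ [0, λ_max], and define x*_{k+1} = argmin_x f(x,k) + D(x, x̃_k) and x̃_{k+1} = (1−λ_{k+1}) x*_{k+1} + λ_{k+1} x̃_k. Then for every k, D(x*, x̃_{k+1}) − D(x*, x̃_k) ≤ (1 − λ_max)·[ −D(x*_{k+1}, x̃_k) + f(x*,k) − f(x*_{k+1},k) ], and in particular the right-hand side is nonpositive. -/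

import Mathlib

open Filter Topology

/-- The Bregman distance induced by `g`:
`D(x,y) = g(x) − g(y) − (x − y)ᵀ∇g(y)`. -/
noncomputable def breg {E : Type*} [NormedAddCommGroup E] [NormedSpace ℝ E]
    (g : E → ℝ) (x y : E) : ℝ :=
  g x - g y - fderiv ℝ g y (x - y)

/-- Gradient inequality for a convex differentiable function. -/
lemma grad_ineq {E : Type*} [NormedAddCommGroup E] [NormedSpace ℝ E]
    {φ : E → ℝ} (hφ : ConvexOn ℝ Set.univ φ) {L : E →L[ℝ] ℝ} {p : E}
    (hL : HasFDerivAt φ L p) (x : E) : φ p + L (x - p) ≤ φ x := by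
  set u : ℝ → E := fun t => t • (x - p) + p with hu
  have hcomp : ConvexOn ℝ Set.univ (φ ∘ u) := by
    have := hφ.comp_affineMap (AffineMap.lineMap p x : ℝ →ᵃ[ℝ] E)
    have e : (φ ∘ u) = φ ∘ ⇑(AffineMap.lineMap p x : ℝ →ᵃ[ℝ] E) := by
      funext t; simp [hu, AffineMap.lineMap_apply]
    rw [e]; simpa using this
  have hu0 : u 0 = p := by simp [hu]
  have hu1 : u 1 = x := by simp [hu]
  have hud : HasDerivAt u (x - p) 0 := by
    have : HasDerivAt (fun t : ℝ => t • (x - p)) ((1:ℝ) • (x - p)) 0 :=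
      (hasDerivAt_id 0).smul_const (x - p)
    simpa [hu] using this.add_const p
  have hder : HasDerivAt (φ ∘ u) (L (x - p)) 0 := by
    have hL' : HasFDerivAt φ L (u 0) := by rw [hu0]; exact hL
    simpa using hL'.comp_hasDerivAt 0 hud
  have := hcomp.le_slope_of_hasDerivAt (Set.mem_univ (0:ℝ)) (Set.mem_univ (1:ℝ))
    one_pos hder
  have hs : slope (φ ∘ u) 0 1 = φ x - φ p := by
    simp [slope, hu0, hu1]
  rw [hs] at this
  linarith

set_option maxHeartbeats 1000000

/-- the descent inequality (equation (34) of the paper) for the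
relaxed proximal iteration:
`D(x*, x̃_{k+1}) − D(x*, x̃_k) ≤ (1 − λ_max)[−D(x*_{k+1}, x̃_k) + f(x*,k) − f(x*_{k+1},k)]`,
and the right-hand side is nonpositive. -/
theorem stmt8 (n : ℕ) (f : EuclideanSpace ℝ (Fin n) → ℕ → ℝ)
    (hfconv : ∀ k, ConvexOn ℝ Set.univ (f · k))
    (hfdiff : ∀ k, ContDiff ℝ 1 (f · k))
    (xs : EuclideanSpace ℝ (Fin n))
    (hxs : ∀ k, f xs k = 0) (hfpos : ∀ x k, 0 ≤ f x k)
    (g : EuclideanSpace ℝ (Fin n) → ℝ)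
    (hg : StrictConvexOn ℝ Set.univ g) (hgdiff : ContDiff ℝ 1 g)
    (hDconv : ∀ x, ConvexOn ℝ Set.univ (fun y => breg g x y))
    (lammax : ℝ) (hlm0 : 0 ≤ lammax) (hlm1 : lammax < 1)
    (lam : ℕ → ℝ) (hlam : ∀ k, lam (k + 1) ∈ Set.Icc 0 lammax)
    (xstar xtilde : ℕ → EuclideanSpace ℝ (Fin n))
    (hmin : ∀ k, ∀ x, f (xstar (k + 1)) k + breg g (xstar (k + 1)) (xtilde k)
      ≤ f x k + breg g x (xtilde k))
    (hupd : ∀ k, xtilde (k + 1)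
      = (1 - lam (k + 1)) • xstar (k + 1) + lam (k + 1) • xtilde k) :
    ∀ k : ℕ,
      breg g xs (xtilde (k + 1)) - breg g xs (xtilde k)
        ≤ (1 - lammax) *
            (-(breg g (xstar (k + 1)) (xtilde k)) + f xs k - f (xstar (k + 1)) k) ∧
      (1 - lammax) *
          (-(breg g (xstar (k + 1)) (xtilde k)) + f xs k - f (xstar (k + 1)) k) ≤ 0 := by
  intro k
  set p := xstar (k + 1) with hp
  set y := xtilde k with hy
  set lk := lam (k + 1) with hlk
  have hgdifferentiable : Differentiable ℝ g := hgdiff.differentiable one_ne_zero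
  have hfdifferentiable : Differentiable ℝ (f · k) := (hfdiff k).differentiable one_ne_zero
  set F : EuclideanSpace ℝ (Fin n) →L[ℝ] ℝ := fderiv ℝ (f · k) p with hF
  set G : EuclideanSpace ℝ (Fin n) →L[ℝ] ℝ := fderiv ℝ g p with hG
  set Ly : EuclideanSpace ℝ (Fin n) →L[ℝ] ℝ := fderiv ℝ g y with hLy
  -- φ := f · k + breg g · y is differentiable at p with derivative F + G - Ly
  have hφder : HasFDerivAt (fun x => f x k + breg g x y) (F + G - Ly) p := by
    have h1 : HasFDerivAt (f · k) F p := (hfdifferentiable p).hasFDerivAt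
    have h2 : HasFDerivAt g G p := (hgdifferentiable p).hasFDerivAt
    have h3 : HasFDerivAt (fun x => Ly (x - y)) Ly p := by
      have : HasFDerivAt (fun x : EuclideanSpace ℝ (Fin n) => Ly x - Ly y) Ly p :=
        (Ly.hasFDerivAt).sub_const (Ly y)
      simpa [map_sub] using this
    have := ((h1.add h2).sub (hasFDerivAt_const (g y) p)).sub h3
    have e : (fun x => f x k + breg g x y) = fun x => f x k + g x - g y - Ly (x - y) := by
      funext x; simp only [breg, ← hLy]; ring
    rw [e]
    exact this.congr_fderiv (by simp)
  -- first-order optimality at the global minimizer p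
  have hopt : F + G - Ly = 0 := by
    have hmin' : IsLocalMin (fun x => f x k + breg g x y) p :=
      Filter.Eventually.of_forall (fun x => hmin k x)
    have := hmin'.fderiv_eq_zero
    rwa [hφder.fderiv] at this
  have hoptxs : G (xs - p) - Ly (xs - p) = -(F (xs - p)) := by
    have := congrArg (fun (L : EuclideanSpace ℝ (Fin n) →L[ℝ] ℝ) => L (xs - p)) hopt
    simp only [ContinuousLinearMap.sub_apply, ContinuousLinearMap.add_apply,
      ContinuousLinearMap.zero_apply] at this
    linarith
  -- convexity of f: F (xs - p) ≤ f xs k - f p k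
  have hfgrad : f p k + F (xs - p) ≤ f xs k :=
    grad_ineq (hfconv k) (hfdifferentiable p).hasFDerivAt xs
  -- Bregman distances are nonnegative
  have hbreg_nonneg : ∀ a b, 0 ≤ breg g a b := by
    intro a b
    have := grad_ineq hg.convexOn (hgdifferentiable b).hasFDerivAt a
    simp only [breg]; linarith
  -- three-point identity
  have hthree : breg g xs y - breg g xs p - breg g p y = G (xs - p) - Ly (xs - p) := by
    simp only [breg, hG, hLy, map_sub]
    ring
  -- key estimate: breg g xs p ≤ breg g xs y + Q
  have hkey : breg g xs p ≤ breg g xs y - breg g p y + f xs k - f p k := by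
    have : breg g xs p = breg g xs y - breg g p y - (G (xs - p) - Ly (xs - p)) := by
      linarith
    rw [this, hoptxs]
    linarith
  set Q : ℝ := -(breg g p y) + f xs k - f p k with hQ
  have hQ0 : Q ≤ 0 := by
    have := hbreg_nonneg p y
    have := hfpos p k
    have := hxs k
    simp only [hQ]; linarith
  obtain ⟨hl0, hl1⟩ := hlam k
  have hl1' : lk < 1 := lt_of_le_of_lt hl1 hlm1
  -- convexity of breg in second argument
  have hconv2 : breg g xs (xtilde (k + 1)) ≤ (1 - lk) * breg g xs p + lk * breg g xs y := by
    rw [hupd k]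
    have := (hDconv xs).2 (Set.mem_univ p) (Set.mem_univ y)
      (by linarith : (0:ℝ) ≤ 1 - lk) hl0 (by ring)
    simpa [smul_eq_mul] using this
  clear_value p y lk Q F G Ly
  have h2 : breg g xs p - breg g xs y ≤ Q := by rw [hQ]; linarith
  have hmain : breg g xs (xtilde (k + 1)) - breg g xs y ≤ (1 - lk) * Q := by
    have h1 : breg g xs (xtilde (k + 1)) - breg g xs y
        ≤ (1 - lk) * (breg g xs p - breg g xs y) := by nlinarith [hconv2]
    calc breg g xs (xtilde (k + 1)) - breg g xs y
        ≤ (1 - lk) * (breg g xs p - breg g xs y) := h1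
      _ ≤ (1 - lk) * Q := by
          apply mul_le_mul_of_nonneg_left h2 (by linarith)
  have hfinal : (1 - lk) * Q ≤ (1 - lammax) * Q :=
    mul_le_mul_of_nonpos_right (by linarith) hQ0
  refine ⟨le_trans hmain hfinal, ?_⟩
  exact mul_nonpos_of_nonneg_of_nonpos (by linarith) hQ0
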